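/- Let f be a polynomial of one variable with integer coefficients such that f(n) is a positive integer for every positive integer n. For positive integers a and b, let g : ℕ⁺ → ℕ⁺ be g(n) = f^n(a), and consider the sequence n ↦ g^n(b). Suppose that for all positive integers a and b with g^n(b) → ∞ (in ℝ) as n → ∞, for every prime p the sequence (g^n(b))_n converges in ℤ_p and the limit does not depend on b (among those b for which the sequence diverges to ∞ in ℝ). Then for every prime number p, the reduction map f_p : ℤ/pℤ → ℤ/pℤ induced by f is not a cyclic permutation of length p. -/

import Mathlib

open Filter

/-- `σ` is a cyclic permutation of length `p` of its (finite) domain: it is a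
bijection and the iterates of some element pass through all elements within
`p` steps. -/
def IsCyclicPermOfLength {F : Type*} (σ : F → F) (p : ℕ) : Prop :=
  Function.Bijective σ ∧ ∃ x : F, ∀ y : F, ∃ i : ℕ, i < p ∧ σ^[i] x = y

/-- The reduction `f_m : ℤ/mℤ → ℤ/mℤ` of a polynomial `f ∈ ℤ[x]`. -/
def polyRed (f : Polynomial ℤ) (m : ℕ) : ZMod m → ZMod m :=
  fun x => Polynomial.eval₂ (Int.castRingHom (ZMod m)) x f

/-- `g(n) = f^n(a)` as a map `ℕ → ℕ` (`f` maps positive integers to positive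
integers, so `toNat` is harmless). -/
def towerStep (f : Polynomial ℤ) (a : ℕ) : ℕ → ℕ :=
  fun m => ((fun z => f.eval z)^[m] (a : ℤ)).toNat

/-- The sequence `n ↦ g^n(b)` where `g(n) = f^n(a)`. -/
def towerSeq (f : Polynomial ℤ) (a b : ℕ) : ℕ → ℕ :=
  fun n => (towerStep f a)^[n] b

/-- Basic facts about a cyclic permutation of full length: the `p`-th iterate
is the identity, and no iterate `σ^[i]` with `i < p` agrees with `σ^[j]`
(`j < p`, `i ≠ j`) at any point. -/
private lemma cyc_facts {F : Type*} [Fintype F] {σ : F → F} {p : ℕ}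
    (hbij : Function.Bijective σ) (hcard : Fintype.card F = p)
    {x₀ : F} (horb : ∀ y : F, ∃ i : ℕ, i < p ∧ σ^[i] x₀ = y) :
    (∀ y, σ^[p] y = y) ∧
      (∀ (i j : ℕ) (y : F), i < p → j < p → σ^[i] y = σ^[j] y → i = j) := by
  have hp0 : 0 < p := by
    rcases Nat.eq_zero_or_pos p with h | h
    · obtain ⟨i, hi, _⟩ := horb x₀; omega
    · exact h
  have hinjFin : Function.Injective (fun i : Fin p => σ^[i.1] x₀) := by
    have hsurj : Function.Surjective (fun i : Fin p => σ^[i.1] x₀) := fun y => by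
      obtain ⟨i, hi, h⟩ := horb y; exact ⟨⟨i, hi⟩, h⟩
    exact ((Fintype.bijective_iff_surjective_and_card _).2
      ⟨hsurj, by simp [hcard]⟩).injective
  have hinj : ∀ i j : ℕ, i < p → j < p → σ^[i] x₀ = σ^[j] x₀ → i = j := by
    intro i j hi hj h
    have h2 := hinjFin (a₁ := ⟨i, hi⟩) (a₂ := ⟨j, hj⟩) h
    exact congrArg Fin.val h2
  have hpx : σ^[p] x₀ = x₀ := by
    obtain ⟨j, hj, hjx⟩ := horb (σ^[p] x₀)
    rcases Nat.eq_zero_or_pos j with rfl | hj0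
    · simpa using hjx.symm
    · exfalso
      have h1 : σ^[j] (σ^[p - j] x₀) = σ^[j] x₀ := by
        rw [← Function.iterate_add_apply, Nat.add_sub_cancel' hj.le, hjx]
      have h2 : σ^[p - j] x₀ = x₀ := (hbij.injective.iterate j) h1
      have h3 := hinj (p - j) 0 (by omega) hp0 (by simpa using h2)
      omega
  have hpid : ∀ y, σ^[p] y = y := by
    intro y
    obtain ⟨i, _, rfl⟩ := horb y
    rw [← Function.iterate_add_apply, Nat.add_comm, Function.iterate_add_apply, hpx]
  refine ⟨hpid, ?_⟩
  have hmod : ∀ (k : ℕ) (y : F), σ^[k] y = σ^[k % p] y := by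
    intro k y
    conv_lhs => rw [← Nat.mod_add_div k p, Function.iterate_add_apply,
      Function.iterate_mul, Function.iterate_fixed (hpid y)]
  intro i j y hi hj h
  obtain ⟨m, hm, rfl⟩ := horb y
  rw [← Function.iterate_add_apply, ← Function.iterate_add_apply] at h
  rw [hmod (i + m), hmod (j + m)] at h
  have h4 : (i + m) % p = (j + m) % p :=
    hinj _ _ (Nat.mod_lt _ hp0) (Nat.mod_lt _ hp0) h
  have h5 : i ≡ j [MOD p] := Nat.ModEq.add_right_cancel' m h4
  have h6 : i % p = j % p := h5
  rwa [Nat.mod_eq_of_lt hi, Nat.mod_eq_of_lt hj] at h6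

/-- Growth: a nonconstant integer polynomial which is positive on positive
integers and has no integer fixed point eventually dominates `x`. -/
private lemma poly_growth (f : Polynomial ℤ)
    (hpos : ∀ n : ℤ, 0 < n → 0 < f.eval n)
    (hne : ∀ x : ℤ, f.eval x ≠ x)
    (hd : 0 < f.natDegree) :
    ∃ N : ℤ, 1 ≤ N ∧ ∀ x : ℤ, N ≤ x → x < f.eval x := by
  have hInj : Function.Injective (Int.castRingHom ℝ) := fun a b hab => by
    have : ((a : ℤ) : ℝ) = ((b : ℤ) : ℝ) := by simpa using hab
    exact_mod_cast this
  have hf0 : f ≠ 0 := fun h => by simp [h] at hd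
  have hlc : 0 < f.leadingCoeff := by
    by_contra hle
    push_neg at hle
    have hQdeg : 0 < (f.map (Int.castRingHom ℝ)).degree := by
      rw [Polynomial.degree_map_eq_of_injective hInj]
      exact Polynomial.natDegree_pos_iff_degree_pos.mp hd
    have hQlc : (f.map (Int.castRingHom ℝ)).leadingCoeff ≤ 0 := by
      rw [Polynomial.leadingCoeff_map_of_injective hInj]
      simp only [Int.coe_castRingHom]
      exact_mod_cast hle
    have h := Polynomial.tendsto_atBot_of_leadingCoeff_nonpos _ hQdeg hQlc
    have h' := h.comp (tendsto_intCast_atTop_atTop (R := ℝ))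
    have hev : ∀ᶠ n : ℤ in atTop, ((f.eval n : ℤ) : ℝ) ≤ 0 := by
      refine (h'.eventually (eventually_le_atBot (0:ℝ))).mono fun n hn => ?_
      rwa [Function.comp_apply, Polynomial.eval_intCast_map] at hn
    obtain ⟨M, hM⟩ := eventually_atTop.mp hev
    have h1 : 0 < f.eval (max M 1) := hpos _ (by positivity)
    have h2 := hM (max M 1) (le_max_left _ _)
    exact absurd h1 (by exact_mod_cast not_lt.mpr h2)
  rcases Nat.lt_or_ge f.natDegree 2 with hnd | hnd
  · -- degree 1 case
    have hnd1 : f.natDegree = 1 := by omega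
    have hf1 : f = Polynomial.C (f.coeff 1) * Polynomial.X + Polynomial.C (f.coeff 0) :=
      Polynomial.eq_X_add_C_of_natDegree_le_one (by omega)
    set c₁ := f.coeff 1 with hc₁def
    set c₀ := f.coeff 0 with hc₀def
    have heval : ∀ x : ℤ, f.eval x = c₁ * x + c₀ := fun x => by
      conv_lhs => rw [hf1]
      simp
    have hc₁pos : 0 < c₁ := by
      have hlceq : f.leadingCoeff = c₁ := by
        rw [Polynomial.leadingCoeff, hnd1]
      rwa [hlceq] at hlc
    by_cases hc : c₁ = 1
    · have hc₀ne : c₀ ≠ 0 := by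
        have h0 : f.eval 0 = c₀ := by rw [heval]; ring
        have := hne 0
        rw [h0] at this
        exact this
      have h1' : 0 < f.eval 1 := hpos 1 one_pos
      rw [heval, hc] at h1'
      refine ⟨1, le_refl 1, fun x hx => ?_⟩
      rw [heval, hc]
      omega
    · have hc2 : 2 ≤ c₁ := by omega
      refine ⟨max 1 (1 - c₀), le_max_left _ _, fun x hx => ?_⟩
      rw [heval]
      have h1 : 1 ≤ x := le_trans (le_max_left _ _) hx
      have h2 : 1 - c₀ ≤ x := le_trans (le_max_right _ _) hx
      nlinarith
  · -- degree ≥ 2 case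
    have hdegX : (Polynomial.X : Polynomial ℤ).degree < f.degree := by
      rw [Polynomial.degree_X, Polynomial.degree_eq_natDegree hf0]
      exact_mod_cast (by omega : 1 < f.natDegree)
    set q := f - Polynomial.X with hqdef
    have hlcq : q.leadingCoeff = f.leadingCoeff :=
      Polynomial.leadingCoeff_sub_of_degree_lt hdegX
    have hdq : q.degree = f.degree := Polynomial.degree_sub_eq_left_of_degree_lt hdegX
    have hQdeg : 0 < (q.map (Int.castRingHom ℝ)).degree := by
      rw [Polynomial.degree_map_eq_of_injective hInj, hdq]
      exact Polynomial.natDegree_pos_iff_degree_pos.mp hd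
    have hQlc : 0 ≤ (q.map (Int.castRingHom ℝ)).leadingCoeff := by
      rw [Polynomial.leadingCoeff_map_of_injective hInj, hlcq]
      simp only [Int.coe_castRingHom]
      exact_mod_cast hlc.le
    have h := Polynomial.tendsto_atTop_of_leadingCoeff_nonneg _ hQdeg hQlc
    have h' := h.comp (tendsto_intCast_atTop_atTop (R := ℝ))
    have hev : ∀ᶠ n : ℤ in atTop, (1 : ℝ) ≤ ((q.eval n : ℤ) : ℝ) := by
      refine (h'.eventually (eventually_ge_atTop (1:ℝ))).mono fun n hn => ?_
      rwa [Function.comp_apply, Polynomial.eval_intCast_map] at hn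
    obtain ⟨M, hM⟩ := eventually_atTop.mp hev
    refine ⟨max M 1, le_max_right _ _, fun x hx => ?_⟩
    have h1 : (1 : ℝ) ≤ ((q.eval x : ℤ) : ℝ) := hM x (le_trans (le_max_left _ _) hx)
    have h2 : (1 : ℤ) ≤ q.eval x := by exact_mod_cast h1
    have h3 : q.eval x = f.eval x - x := by
      rw [hqdef]
      simp
    omega

theorem stmt_1 (f : Polynomial ℤ)
    (hpos : ∀ n : ℤ, 0 < n → 0 < f.eval n)
    (hconv : ∀ a : ℕ, 0 < a → ∀ (p : ℕ) [Fact p.Prime],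
      ∃ L : ℤ_[p], ∀ b : ℕ, 0 < b →
        Tendsto (fun n => (towerSeq f a b n : ℝ)) atTop atTop →
        Tendsto (fun n => (towerSeq f a b n : ℤ_[p])) atTop (nhds L)) :
    ∀ p : ℕ, p.Prime → ¬ IsCyclicPermOfLength (polyRed f p) p := by
  intro p hp hcyc
  haveI hfp : Fact p.Prime := ⟨hp⟩
  haveI : NeZero p := ⟨hp.pos.ne'⟩
  obtain ⟨hbij, x₀, horb⟩ := hcyc
  set σ : ZMod p → ZMod p := polyRed f p with hσdef
  obtain ⟨hpid, hfix⟩ := cyc_facts hbij (ZMod.card p) horb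
  have hp2 : 2 ≤ p := hp.two_le
  -- reduction commutes with evaluation
  have hred : ∀ n : ℤ, ((f.eval n : ℤ) : ZMod p) = σ ((n : ZMod p)) := by
    intro n
    show _ = Polynomial.eval₂ (Int.castRingHom (ZMod p)) _ f
    rw [show ((n : ℤ) : ZMod p) = (Int.castRingHom (ZMod p)) n from rfl,
      Polynomial.eval₂_at_apply]
    rfl
  have hrediter : ∀ (m : ℕ) (n : ℤ),
      (((fun z => f.eval z)^[m] n : ℤ) : ZMod p) = σ^[m] ((n : ZMod p)) := by
    intro m
    induction m with
    | zero => intro n; simp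
    | succ m ih =>
      intro n
      rw [Function.iterate_succ_apply', Function.iterate_succ_apply']
      rw [hred, ih]
  -- no integer fixed points
  have hnfix : ∀ x : ℤ, f.eval x ≠ x := by
    intro x hx
    have h1 := hred x
    rw [hx] at h1
    have h2 := hfix 1 0 ((x : ℤ) : ZMod p) (by omega) (by omega) (by simpa using h1.symm)
    omega
  -- f is nonconstant
  have hdpos : 0 < f.natDegree := by
    by_contra h
    push_neg at h
    have h0 : f.natDegree = 0 := by omega
    have hC := Polynomial.eq_C_of_natDegree_eq_zero h0
    have hc : ∀ x : ZMod p, σ x = ((f.coeff 0 : ℤ) : ZMod p) := by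
      intro x
      show Polynomial.eval₂ _ x f = _
      conv_lhs => rw [hC]
      rw [Polynomial.eval₂_C]
      rfl
    have h01 : (0 : ZMod p) = 1 := hbij.injective (by rw [hc, hc])
    exact one_ne_zero h01.symm
  obtain ⟨N, hN1, hNgrow⟩ := poly_growth f hpos hnfix hdpos
  set a : ℕ := N.toNat with hadef
  have haN : (a : ℤ) = N := Int.toNat_of_nonneg (by omega)
  have ha1 : 1 ≤ a := by omega
  -- growth of the iterates
  have hiterge : ∀ m : ℕ, (a : ℤ) + m ≤ (fun z => f.eval z)^[m] (a : ℤ) := by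
    intro m
    induction m with
    | zero => simp
    | succ m ih =>
      rw [Function.iterate_succ_apply']
      have hge : N ≤ (fun z => f.eval z)^[m] (a : ℤ) := by
        have : (0 : ℤ) ≤ m := Int.natCast_nonneg m
        omega
      have hgt := hNgrow _ hge
      have : ((m : ℤ) + 1 : ℤ) = ((m + 1 : ℕ) : ℤ) := by push_cast; ring
      omega
  have hstep : ∀ m : ℕ, a + m ≤ towerStep f a m := by
    intro m
    have h1 := hiterge m
    unfold towerStep
    omega
  have hstepcast : ∀ m : ℕ, ((towerStep f a m : ℕ) : ℤ) = (fun z => f.eval z)^[m] (a : ℤ) := by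
    intro m
    have h1 := hiterge m
    unfold towerStep
    omega
  -- mod-p structure
  set abar : ZMod p := ((a : ℕ) : ZMod p) with habar
  have hcastiter : ∀ m : ℕ, ((towerStep f a m : ℕ) : ZMod p) = σ^[m] abar := by
    intro m
    have h1 : ((towerStep f a m : ℕ) : ZMod p) = (((towerStep f a m : ℕ) : ℤ) : ZMod p) := by
      push_cast
      rfl
    rw [h1, hstepcast m, hrediter m (a : ℤ)]
    congr 1
    push_cast
    rfl
  set h : ZMod p → ZMod p := fun z => σ^[z.val] abar with hhdef
  have hmodred : ∀ m : ℕ, σ^[m] abar = σ^[m % p] abar := by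
    intro m
    conv_lhs => rw [← Nat.mod_add_div m p, Function.iterate_add_apply,
      Function.iterate_mul, Function.iterate_fixed (hpid abar)]
  have hstepmod : ∀ m : ℕ, ((towerStep f a m : ℕ) : ZMod p) = h ((m : ℕ) : ZMod p) := by
    intro m
    rw [hcastiter m, hmodred m, hhdef]
    simp [ZMod.val_natCast]
  have hseqmod : ∀ (b n : ℕ), ((towerSeq f a b n : ℕ) : ZMod p) = h^[n] ((b : ℕ) : ZMod p) := by
    intro b n
    induction n with
    | zero => simp [towerSeq]
    | succ n ih =>
      have hts : towerSeq f a b (n + 1) = towerStep f a (towerSeq f a b n) := by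
        simp [towerSeq, Function.iterate_succ_apply']
      rw [hts, hstepmod, ih, Function.iterate_succ_apply']
  have hinjh : Function.Injective h := by
    intro z w hzw
    have h1 := hfix z.val w.val abar (ZMod.val_lt z) (ZMod.val_lt w) hzw
    exact ZMod.val_injective p h1
  -- divergence to infinity
  have hseqge : ∀ b n : ℕ, n ≤ towerSeq f a b n := by
    intro b n
    induction n with
    | zero => omega
    | succ n ih =>
      have hts : towerSeq f a b (n + 1) = towerStep f a (towerSeq f a b n) := by
        simp [towerSeq, Function.iterate_succ_apply']
      have := hstep (towerSeq f a b n)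
      omega
  have hdiv : ∀ b : ℕ, Tendsto (fun n => (towerSeq f a b n : ℝ)) atTop atTop := by
    intro b
    apply tendsto_atTop_mono (f := fun n : ℕ => (n : ℝ))
    · intro n
      exact_mod_cast hseqge b n
    · exact tendsto_natCast_atTop_atTop
  -- the contradiction
  obtain ⟨L, hL⟩ := hconv a (by omega) p
  have h1 := hL 1 one_pos (hdiv 1)
  have h2 := hL 2 (by omega) (hdiv 2)
  have h0 : Tendsto (fun n => (towerSeq f a 1 n : ℤ_[p]) - (towerSeq f a 2 n : ℤ_[p]))
      atTop (nhds 0) := by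
    simpa using h1.sub h2
  have hnorm : ∀ᶠ n in atTop,
      ‖(towerSeq f a 1 n : ℤ_[p]) - (towerSeq f a 2 n : ℤ_[p])‖ < 1 := by
    have := Metric.tendsto_nhds.mp h0 1 one_pos
    refine this.mono fun n hn => ?_
    rwa [dist_zero_right] at hn
  obtain ⟨n, hn⟩ := hnorm.exists
  have hdvd : (p : ℤ) ∣ ((towerSeq f a 1 n : ℤ) - (towerSeq f a 2 n : ℤ)) := by
    rw [← PadicInt.norm_int_lt_one_iff_dvd]
    convert hn using 2
    push_cast
    ring
  have hcasteq : ((towerSeq f a 1 n : ℕ) : ZMod p) = ((towerSeq f a 2 n : ℕ) : ZMod p) := by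
    have hz := (ZMod.intCast_zmod_eq_zero_iff_dvd _ p).mpr hdvd
    push_cast at hz
    exact sub_eq_zero.mp hz
  rw [hseqmod, hseqmod] at hcasteq
  have h12 : ((1 : ℕ) : ZMod p) = ((2 : ℕ) : ZMod p) := hinjh.iterate n hcasteq
  have hmodeq : 1 ≡ 2 [MOD p] := (ZMod.natCast_eq_natCast_iff _ _ _).mp h12
  have hpdvd : p ∣ 2 - 1 := (Nat.modEq_iff_dvd' (by norm_num)).mp hmodeq
  simp at hpdvd
  omega
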